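/- Let B be a BSCC of an LTS L, θ a state formula, and N = |S| + 1. Then every run ρ of L with ρ 0 ∈ B satisfies (ρ,N) ⊨ F_p^∞ θ if and only if B contains no θ-avoiding cycle. -/

import Mathlib

open scoped Classical
open MeasureTheory

/-- A labelled transition system: a finite set of states `S`, an initial state,
a transition relation in which every state has at least one successor, and a
labeling of states by sets of atomic propositions. -/
structure LTS (S AP : Type) where
  init : S
  T : S → S → Prop
  lbl : S → Set AP
  succ_nonempty : ∀ s : S, ∃ t : S, T s t

variable {S AP : Type}

/-- A run of an LTS: an infinite sequence of states following the transitions. -/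
def IsRun (L : LTS S AP) (ρ : ℕ → S) : Prop := ∀ i : ℕ, L.T (ρ i) (ρ (i + 1))

/-- The shifted run `ρ[i..]`. -/
def shift (ρ : ℕ → S) (i : ℕ) : ℕ → S := fun n => ρ (n + i)

/-- A state formula: a (possibly empty, i.e. `false`) disjunction of literals,
each literal being a polarity (`true` = positive) paired with an atomic proposition. -/
abbrev StateFormula (AP : Type) := List (Bool × AP)

/-- A state `s` satisfies a state formula `θ`. -/
def SatState (L : LTS S AP) (θ : StateFormula AP) (s : S) : Prop :=
  ∃ p ∈ θ, if p.1 then p.2 ∈ L.lbl s else p.2 ∉ L.lbl s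

/-- A (nonempty) finite path of the LTS. -/
def IsPath (L : LTS S AP) (u : List S) : Prop := u ≠ [] ∧ u.Chain' L.T

/-- A loop: a finite path with at least one transition whose first and last states coincide. -/
def IsLoop (L : LTS S AP) (u : List S) : Prop :=
  2 ≤ u.length ∧ u.Chain' L.T ∧ u.head? = u.getLast?

/-- The set `occ u` of states occurring in a finite sequence. -/
def occ (u : List S) : Set S := {s | s ∈ u}

/-- Reachability along transitions. -/
def Reachable (L : LTS S AP) : S → S → Prop := Relation.ReflTransGen L.T

/-- A strongly connected component: an equivalence class of mutual reachability. -/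
def IsSCC (L : LTS S AP) (C : Set S) : Prop :=
  ∃ s : S, C = {t : S | Reachable L s t ∧ Reachable L t s}

/-- A bottom strongly connected component: an SCC closed under transitions. -/
def IsBSCC (L : LTS S AP) (C : Set S) : Prop :=
  IsSCC L C ∧ ∀ s ∈ C, ∀ t : S, L.T s t → t ∈ C

/-- For a BSCC `B` of `L`, a state formula `θ` and `N = |S| + 1`:
every run `ρ` of `L` starting in `B` satisfies `(ρ,N) ⊨ F_p^∞ θ` iff `B` contains
no `θ`-avoiding cycle. -/
theorem bscc_finf_iff_no_avoiding_cycle [Fintype S] (L : LTS S AP) (B : Set S)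
    (hB : IsBSCC L B) (θ : StateFormula AP) :
    (∀ ρ : ℕ → S, IsRun L ρ → ρ 0 ∈ B →
      ∀ i : ℕ, ∃ j ≤ Fintype.card S + 1, SatState L θ (ρ (i + j))) ↔
    ¬ ∃ u : List S, IsLoop L u ∧ occ u ⊆ B ∧ ∀ s ∈ u, ¬ SatState L θ s := by
  constructor
  · rintro h ⟨u, ⟨hlen, hchain, hhl⟩, hocc, havoid⟩
    obtain ⟨m, hm⟩ : ∃ m, u.length = m + 1 := ⟨u.length - 1, by omega⟩
    have hm1 : 1 ≤ m := by omega
    have hmpos : 0 < m := hm1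
    have hmlt : ∀ n : ℕ, n % m < u.length := fun n => by
      have := Nat.mod_lt n hmpos; omega
    have hmod : ∀ n : ℕ, (n + 1) % m = if n % m + 1 = m then 0 else n % m + 1 := by
      intro n
      have hdiv : m * (n / m) + n % m = n := Nat.div_add_mod n m
      split_ifs with hc
      · have he : n + 1 = m * (n / m + 1) := by rw [Nat.mul_add, Nat.mul_one]; omega
        rw [he, Nat.mul_mod_right]
      · have he : n + 1 = m * (n / m) + (n % m + 1) := by omega
        rw [he, Nat.mul_add_mod]
        exact Nat.mod_eq_of_lt (by have := Nat.mod_lt n hmpos; omega)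
    have hgetlast : u[m]'(by omega) = u[0]'(by omega) := by
      have h1 : u.head? = some (u[0]'(by omega)) := by
        rw [List.head?_eq_getElem?, List.getElem?_eq_getElem]
      have h2 : u.getLast? = some (u[m]'(by omega)) := by
        rw [List.getLast?_eq_getElem?, List.getElem?_eq_getElem (by omega)]
        simp [hm]
      rw [h1, h2] at hhl
      exact (Option.some_inj.mp hhl).symm
    have hchain' := List.isChain_iff_getElem.mp hchain
    set ρ : ℕ → S := fun n => u[n % m]'(hmlt n) with hρ
    have hrun : IsRun L ρ := by
      intro n
      show L.T (u[n % m]'(hmlt n)) (u[(n+1) % m]'(hmlt (n+1)))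
      have hlt := Nat.mod_lt n hmpos
      by_cases hc : n % m + 1 = m
      · have h0 : (n + 1) % m = 0 := by rw [hmod n, if_pos hc]
        have := hchain' (n % m) (by omega)
        have heq : u[n % m + 1]'(by omega) = u[(n+1) % m]'(hmlt (n+1)) := by
          simp only [h0, hc]
          exact hgetlast
        rwa [heq] at this
      · have h0 : (n + 1) % m = n % m + 1 := by rw [hmod n, if_neg hc]
        have := hchain' (n % m) (by omega)
        have heq : u[n % m + 1]'(by omega) = u[(n+1) % m]'(hmlt (n+1)) := by
          simp only [h0]
        rwa [heq] at this
    have h0B : ρ 0 ∈ B := by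
      apply hocc
      exact List.getElem_mem _
    obtain ⟨j, _, hsat⟩ := h ρ hrun h0B 0
    exact havoid _ (List.getElem_mem _) hsat
  · intro hnoloop ρ hrun h0B i
    by_contra hcon
    push_neg at hcon
    have hall : ∀ n : ℕ, ρ n ∈ B := by
      intro n
      induction n with
      | zero => exact h0B
      | succ k ih => exact hB.2 _ ih _ (hrun k)
    set N := Fintype.card S + 1 with hN
    have hinj : ¬ Function.Injective (fun k : Fin (N + 1) => ρ (i + k)) := by
      intro hinjf
      have := Fintype.card_le_of_injective _ hinjf
      simp [hN] at this
    obtain ⟨a, b, hab, hne⟩ : ∃ a b : Fin (N + 1), ρ (i + a) = ρ (i + b) ∧ a ≠ b := by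
      by_contra hc
      push_neg at hc
      exact hinj fun a b h => by
        by_contra hne
        exact hne (hc a b h)
    -- wlog a < b
    obtain ⟨a', b', hlt', heq'⟩ : ∃ a' b' : ℕ, a' < b' ∧ b' ≤ N ∧ ρ (i + a') = ρ (i + b') := by
      rcases lt_or_gt_of_ne hne with hl | hl
      · exact ⟨a, b, hl, by omega, hab⟩
      · exact ⟨b, a, hl, by omega, hab.symm⟩
    obtain ⟨hbN, heq'⟩ := heq'
    set u : List S := (List.range (b' - a' + 1)).map (fun t => ρ (i + a' + t)) with hu
    have hulen : u.length = b' - a' + 1 := by simp [hu]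
    have huget : ∀ (k : ℕ) (hk : k < u.length), u[k]'hk = ρ (i + a' + k) := by
      intro k hk
      simp [hu]
    apply hnoloop
    refine ⟨u, ⟨by omega, ?_, ?_⟩, ?_, ?_⟩
    · apply List.isChain_iff_getElem.mpr
      intro k hk
      simp only [List.get_eq_getElem, huget]
      have : i + a' + (k + 1) = (i + a' + k) + 1 := by ring
      rw [this]
      exact hrun _
    · rw [List.head?_eq_getElem?, List.getLast?_eq_getElem?,
        List.getElem?_eq_getElem (by omega), List.getElem?_eq_getElem (by omega)]
      rw [huget, huget]
      congr 1
      rw [hulen]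
      have : i + a' + (b' - a' + 1 - 1) = i + b' := by omega
      rw [this]
      exact heq'
    · intro s hs
      simp only [occ, Set.mem_setOf_eq, hu, List.mem_map, List.mem_range] at hs
      obtain ⟨t, _, rfl⟩ := hs
      exact hall _
    · intro s hs
      simp only [hu, List.mem_map, List.mem_range] at hs
      obtain ⟨t, ht, rfl⟩ := hs
      have he : i + a' + t = i + (a' + t) := by omega
      rw [he]
      exact hcon (a' + t) (by omega)
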